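/- The tensor product of two separable S-rings over finite abelian groups is separable: if A₁ over G₁ and A₂ over G₂ are each separable with respect to the class of abelian groups, then A₁ ⊗ A₂ over G₁ × G₂ is separable with respect to the class of abelian groups. -/

import Mathlib

open scoped BigOperators

/-- The indicator element `X̲ = Σ_{x∈X} x` of a finset in the integral group ring `ℤG`. -/
noncomputable def grpInd {G : Type*} [Group G] (X : Finset G) : MonoidAlgebra ℤ G :=
  ∑ x ∈ X, MonoidAlgebra.single x (1 : ℤ)

/-- A Schur ring over a finite group `G`: a partition of `G` containing `{1}`,
closed under inverses, whose indicator elements span a subring of `ℤG`. -/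
structure SchurRing (G : Type*) [Group G] [Fintype G] [DecidableEq G] where
  parts : Finset (Finset G)
  nonempty_mem : ∀ X ∈ parts, X.Nonempty
  cover : ∀ g : G, ∃ X ∈ parts, g ∈ X
  pairwise_disjoint : ∀ X ∈ parts, ∀ Y ∈ parts, X ≠ Y → Disjoint X Y
  one_mem : ({1} : Finset G) ∈ parts
  inv_mem : ∀ X ∈ parts, X.image (·⁻¹) ∈ parts
  mul_mem : ∀ X ∈ parts, ∀ Y ∈ parts, ∃ c : Finset G → ℤ,
    grpInd X * grpInd Y = ∑ Z ∈ parts, c Z • grpInd Z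

namespace SchurRing

variable {G : Type*} [Group G] [Fintype G] [DecidableEq G]

/-- The underlying `ℤ`-module of the Schur ring: the span of the indicators of basic sets. -/
noncomputable def carrier (A : SchurRing G) : Submodule ℤ (MonoidAlgebra ℤ G) :=
  Submodule.span ℤ {v | ∃ X ∈ A.parts, v = grpInd X}

/-- `X ⊆ G` is an `A`-set if its indicator lies in `A`. -/
def IsASet (A : SchurRing G) (X : Finset G) : Prop := grpInd X ∈ A.carrier

/-- `A` is a subring of `B` (as S-rings over the same group). -/
def le (A B : SchurRing G) : Prop := ∀ X ∈ A.parts, grpInd X ∈ B.carrier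

end SchurRing

/-- An algebraic isomorphism of Schur rings: a bijection of basic sets preserving all
structure constants (the structure constant `c^Z_{X,Y}` is the coefficient of the
product `X̲·Y̲` at any `z ∈ Z`). -/
def IsAlgIso {G G' : Type*} [Group G] [Fintype G] [DecidableEq G]
    [Group G'] [Fintype G'] [DecidableEq G']
    (A : SchurRing G) (A' : SchurRing G') (φ : Finset G → Finset G') : Prop :=
  Set.BijOn φ ↑A.parts ↑A'.parts ∧
  ∀ X ∈ A.parts, ∀ Y ∈ A.parts, ∀ Z ∈ A.parts, ∀ z ∈ Z, ∀ z' ∈ φ Z,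
    (grpInd X * grpInd Y).coeff z = (grpInd (φ X) * grpInd (φ Y)).coeff z'

/-- A combinatorial isomorphism of Schur rings: a bijection `G → G'` mapping basic sets to
basic sets and inducing a Cayley graph isomorphism on each basic set. -/
def IsCombIso {G G' : Type*} [Group G] [Fintype G] [DecidableEq G]
    [Group G'] [Fintype G'] [DecidableEq G']
    (A : SchurRing G) (A' : SchurRing G') (f : G → G') : Prop :=
  Function.Bijective f ∧
  ∀ X ∈ A.parts, X.image f ∈ A'.parts ∧
    ∀ g h : G, h * g⁻¹ ∈ X ↔ f h * (f g)⁻¹ ∈ X.image f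

/-- An automorphism of a Schur ring: a permutation of `G` preserving the edge set of
`Cay(G,X)` for every basic set `X`. -/
def IsSchurAut {G : Type*} [Group G] [Fintype G] [DecidableEq G]
    (A : SchurRing G) (f : G → G) : Prop :=
  Function.Bijective f ∧ ∀ X ∈ A.parts, ∀ g h : G, h * g⁻¹ ∈ X ↔ f h * (f g)⁻¹ ∈ X

/-- Separability with respect to the class of (finite) abelian groups. -/
def SchurRing.IsSeparableAbelian {G : Type} [Group G] [Fintype G] [DecidableEq G]
    (A : SchurRing G) : Prop :=
  ∀ (G' : Type) [CommGroup G'] [Fintype G'] [DecidableEq G'],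
    ∀ (A' : SchurRing G') (φ : Finset G → Finset G'),
    IsAlgIso A A' φ →
    ∃ f : G → G', IsCombIso A A' f ∧ ∀ X ∈ A.parts, φ X = X.image f

section Basic

variable {G : Type*} [Group G] [Fintype G] [DecidableEq G]

lemma grpInd_apply (X : Finset G) (g : G) :
    (grpInd X).coeff g = if g ∈ X then (1 : ℤ) else 0 := by
  unfold grpInd
  rw [MonoidAlgebra.coeff_sum, Finset.sum_apply']
  simp [Finsupp.single_apply]

lemma grpInd_mul_apply (X Y : Finset G) (g : G) :
    (grpInd X * grpInd Y).coeff g = ∑ x ∈ X, ∑ y ∈ Y, (if x * y = g then (1 : ℤ) else 0) := by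
  unfold grpInd
  rw [Finset.sum_mul_sum]
  simp only [MonoidAlgebra.single_mul_single, one_mul]
  rw [MonoidAlgebra.coeff_sum, Finset.sum_apply']
  refine Finset.sum_congr rfl fun x hx => ?_
  rw [MonoidAlgebra.coeff_sum, Finset.sum_apply']
  refine Finset.sum_congr rfl fun y hy => ?_
  simp [Finsupp.single_apply]

lemma grpInd_mul_apply_nonneg (X Y : Finset G) (g : G) :
    0 ≤ (grpInd X * grpInd Y).coeff g := by
  rw [grpInd_mul_apply]
  refine Finset.sum_nonneg fun x hx => Finset.sum_nonneg fun y hy => ?_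
  split <;> norm_num

lemma grpInd_mul_apply_pos_iff (X Y : Finset G) (g : G) :
    0 < (grpInd X * grpInd Y).coeff g ↔ ∃ x ∈ X, ∃ y ∈ Y, x * y = g := by
  rw [grpInd_mul_apply]
  constructor
  · intro h
    by_contra hc
    push_neg at hc
    rw [Finset.sum_eq_zero] at h
    · exact lt_irrefl 0 h
    intro x hx
    refine Finset.sum_eq_zero fun y hy => ?_
    simp [hc x hx y hy]
  · rintro ⟨x, hx, y, hy, rfl⟩
    refine Finset.sum_pos' (fun a ha => Finset.sum_nonneg fun b hb => by split <;> norm_num)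
      ⟨x, hx, Finset.sum_pos' (fun b hb => by split <;> norm_num) ⟨y, hy, by simp⟩⟩

lemma grpInd_mul_apply_ne_zero_iff (X Y : Finset G) (g : G) :
    (grpInd X * grpInd Y).coeff g ≠ 0 ↔ ∃ x ∈ X, ∃ y ∈ Y, x * y = g := by
  rw [← grpInd_mul_apply_pos_iff]
  constructor
  · intro h; exact lt_of_le_of_ne (grpInd_mul_apply_nonneg X Y g) (Ne.symm h)
  · intro h; exact ne_of_gt h

lemma sum_grpInd (X : Finset G) : ∑ g : G, (grpInd X).coeff g = (X.card : ℤ) := by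
  simp only [grpInd_apply]
  rw [Finset.sum_ite_mem, Finset.univ_inter, Finset.sum_const, nsmul_eq_mul, mul_one]

lemma sum_grpInd_mul (X Y : Finset G) :
    ∑ g : G, (grpInd X * grpInd Y).coeff g = (X.card : ℤ) * Y.card := by
  simp only [grpInd_mul_apply]
  rw [Finset.sum_comm]
  have : ∀ x ∈ X, ∑ g : G, ∑ y ∈ Y, (if x * y = g then (1:ℤ) else 0) = (Y.card : ℤ) := by
    intro x hx
    rw [Finset.sum_comm]
    have : ∀ y ∈ Y, ∑ g : G, (if x * y = g then (1:ℤ) else 0) = 1 := by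
      intro y hy; simp
    rw [Finset.sum_congr rfl this, Finset.sum_const, nsmul_eq_mul, mul_one]
  rw [Finset.sum_congr rfl this, Finset.sum_const, nsmul_eq_mul]

lemma grpInd_mul_inv_apply_one (X : Finset G) :
    (grpInd X * grpInd (X.image (·⁻¹))).coeff 1 = (X.card : ℤ) := by
  rw [grpInd_mul_apply]
  have : ∀ x ∈ X, ∑ y ∈ X.image (·⁻¹), (if x * y = 1 then (1:ℤ) else 0) = 1 := by
    intro x hx
    have h1 : ∀ y : G, x * y = 1 ↔ y = x⁻¹ := by
      intro y; rw [mul_eq_one_iff_inv_eq, eq_comm]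
    simp only [h1]
    rw [Finset.sum_ite_eq' (X.image (·⁻¹)) x⁻¹ (fun _ => (1:ℤ))]
    have : x⁻¹ ∈ X.image (·⁻¹) := Finset.mem_image.mpr ⟨x, hx, rfl⟩
    simp [this]
  rw [Finset.sum_congr rfl this, Finset.sum_const, nsmul_eq_mul, mul_one]

end Basic
section Parts

variable {G : Type*} [Group G] [Fintype G] [DecidableEq G]

lemma SchurRing.part_eq (A : SchurRing G) {X Y : Finset G} {g : G}
    (hX : X ∈ A.parts) (hY : Y ∈ A.parts) (hgX : g ∈ X) (hgY : g ∈ Y) : X = Y := by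
  by_contra h
  exact (Finset.disjoint_left.mp (A.pairwise_disjoint X hX Y hY h)) hgX hgY

lemma SchurRing.eq_one_part (A : SchurRing G) {X : Finset G}
    (hX : X ∈ A.parts) (h1 : (1 : G) ∈ X) : X = {1} :=
  A.part_eq hX A.one_mem h1 (Finset.mem_singleton_self 1)

lemma SchurRing.sum_card_parts (A : SchurRing G) :
    ∑ X ∈ A.parts, X.card = Fintype.card G := by
  have huniv : (Finset.univ : Finset G) = A.parts.biUnion id := by
    ext g
    simp only [Finset.mem_univ, true_iff, Finset.mem_biUnion, id]
    exact A.cover g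
  rw [← Finset.card_univ, huniv]
  exact (Finset.card_biUnion (fun X hX Y hY h => A.pairwise_disjoint X hX Y hY h)).symm

end Parts

section AlgIso

variable {G G' : Type*} [Group G] [Fintype G] [DecidableEq G]
  [Group G'] [Fintype G'] [DecidableEq G']
  {A : SchurRing G} {A' : SchurRing G'} {φ : Finset G → Finset G'}

lemma algIso_mapsTo (hφ : IsAlgIso A A' φ) {X : Finset G} (hX : X ∈ A.parts) :
    φ X ∈ A'.parts := hφ.1.1 hX

lemma algIso_injOn (hφ : IsAlgIso A A' φ) {X Y : Finset G} (hX : X ∈ A.parts)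
    (hY : Y ∈ A.parts) (h : φ X = φ Y) : X = Y := hφ.1.2.1 hX hY h

lemma algIso_cover (hφ : IsAlgIso A A' φ) (g' : G') : ∃ Z ∈ A.parts, g' ∈ φ Z := by
  obtain ⟨Z', hZ', hg⟩ := A'.cover g'
  obtain ⟨Z, hZ, rfl⟩ := hφ.1.2.2 hZ'
  exact ⟨Z, hZ, hg⟩

lemma algIso_transfer (hφ : IsAlgIso A A' φ) {X Y Z : Finset G}
    (hX : X ∈ A.parts) (hY : Y ∈ A.parts) (hZ : Z ∈ A.parts) {z : G} (hz : z ∈ Z)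
    {z' : G'} (hz' : z' ∈ φ Z) :
    (grpInd (φ X) * grpInd (φ Y)).coeff z' = (grpInd X * grpInd Y).coeff z :=
  (hφ.2 X hX Y hY Z hZ z hz z' hz').symm

/-- distinct parts have disjoint images, hence: if `g' ∈ φ Z` and `g' ∈ φ W` then `Z = W`. -/
lemma algIso_part_eq (hφ : IsAlgIso A A' φ) {Z W : Finset G} (hZ : Z ∈ A.parts)
    (hW : W ∈ A.parts) {g' : G'} (hg1 : g' ∈ φ Z) (hg2 : g' ∈ φ W) : Z = W :=
  algIso_injOn hφ hZ hW
    (A'.part_eq (algIso_mapsTo hφ hZ) (algIso_mapsTo hφ hW) hg1 hg2)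

lemma algIso_one (hφ : IsAlgIso A A' φ) : φ ({1} : Finset G) = ({1} : Finset G') := by
  set S := φ ({1} : Finset G) with hSdef
  have hS : S ∈ A'.parts := algIso_mapsTo hφ A.one_mem
  -- pointwise: (grpInd S * grpInd S).coeff g' = grpInd S g'
  have hpt : ∀ g' : G', (grpInd S * grpInd S).coeff g' = (grpInd S).coeff g' := by
    intro g'
    obtain ⟨Z, hZ, hg⟩ := algIso_cover hφ g'
    obtain ⟨z, hz⟩ := A.nonempty_mem Z hZ
    rw [algIso_transfer hφ A.one_mem A.one_mem hZ hz hg]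
    rw [grpInd_mul_apply, grpInd_apply]
    by_cases hZ1 : Z = ({1} : Finset G)
    · subst hZ1
      rw [Finset.sum_singleton, Finset.sum_singleton]
      have hz1 : z = 1 := Finset.mem_singleton.mp hz
      have hgS : g' ∈ S := hg
      simp [hz1, hgS]
    · have hz1 : z ≠ 1 := by
        rintro rfl
        exact hZ1 (A.eq_one_part hZ hz)
      have hgS : g' ∉ S := by
        intro hgS
        exact hZ1 (algIso_part_eq hφ hZ A.one_mem hg hgS)
      rw [Finset.sum_singleton, Finset.sum_singleton]
      simp [hgS, Ne.symm hz1]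
  have hsum : (S.card : ℤ) * S.card = S.card := by
    rw [← sum_grpInd_mul, ← sum_grpInd]
    exact Finset.sum_congr rfl fun g _ => hpt g
  have hcardpos : S.card ≠ 0 :=
    Finset.card_ne_zero_of_mem (A'.nonempty_mem S hS).choose_spec
  have hcard1 : S.card = 1 := by
    have : (S.card : ℤ) ≠ 0 := Int.natCast_ne_zero.mpr hcardpos
    have := mul_right_cancel₀ this (by rw [hsum, one_mul] : (S.card : ℤ) * S.card = 1 * S.card)
    exact_mod_cast this
  obtain ⟨s, hs⟩ := Finset.card_eq_one.mp hcard1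
  have hsS : s ∈ S := by rw [hs]; exact Finset.mem_singleton_self s
  have hss : s * s ∈ S := by
    have hpos : 0 < (grpInd S * grpInd S).coeff (s * s) :=
      (grpInd_mul_apply_pos_iff S S (s * s)).mpr ⟨s, hsS, s, hsS, rfl⟩
    rw [hpt (s * s), grpInd_apply] at hpos
    by_contra h
    simp [h] at hpos
  have hss' : s * s = s := by rw [hs] at hss; simpa using hss
  have hs1 : s = 1 := by
    have h2 : s * s = s * 1 := by rw [mul_one, hss']
    exact mul_left_cancel h2
  rw [hs, hs1]

lemma algIso_inv (hφ : IsAlgIso A A' φ) {X : Finset G} (hX : X ∈ A.parts) :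
    φ (X.image (·⁻¹)) = (φ X).image (·⁻¹) := by
  have hXi : X.image (·⁻¹) ∈ A.parts := A.inv_mem X hX
  have h1 : (1 : G') ∈ φ ({1} : Finset G) := by rw [algIso_one hφ]; exact Finset.mem_singleton_self 1
  have hval : (grpInd (φ X) * grpInd (φ (X.image (·⁻¹)))).coeff 1 = (X.card : ℤ) := by
    rw [algIso_transfer hφ hX hXi A.one_mem (Finset.mem_singleton_self 1) h1]
    exact grpInd_mul_inv_apply_one X
  have hpos : 0 < (grpInd (φ X) * grpInd (φ (X.image (·⁻¹)))).coeff 1 := by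
    rw [hval]
    exact_mod_cast Nat.pos_of_ne_zero (Finset.card_ne_zero_of_mem (A.nonempty_mem X hX).choose_spec)
  obtain ⟨a, ha, b, hb, hab⟩ := (grpInd_mul_apply_pos_iff _ _ _).mp hpos
  have hbinv : b = a⁻¹ := by rw [mul_eq_one_iff_inv_eq] at hab; exact hab.symm
  have hbmem : b ∈ (φ X).image (·⁻¹) := Finset.mem_image.mpr ⟨a, ha, hbinv.symm⟩
  exact A'.part_eq (algIso_mapsTo hφ hXi) (A'.inv_mem _ (algIso_mapsTo hφ hX)) hb hbmem

lemma algIso_card (hφ : IsAlgIso A A' φ) {X : Finset G} (hX : X ∈ A.parts) :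
    (φ X).card = X.card := by
  have h1 : (1 : G') ∈ φ ({1} : Finset G) := by rw [algIso_one hφ]; exact Finset.mem_singleton_self 1
  have hval : (grpInd (φ X) * grpInd (φ (X.image (·⁻¹)))).coeff 1 = (X.card : ℤ) := by
    rw [algIso_transfer hφ hX (A.inv_mem X hX) A.one_mem (Finset.mem_singleton_self 1) h1]
    exact grpInd_mul_inv_apply_one X
  rw [algIso_inv hφ hX, grpInd_mul_inv_apply_one (φ X)] at hval
  exact_mod_cast hval

lemma algIso_parts_eq (hφ : IsAlgIso A A' φ) : A'.parts = A.parts.image φ := by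
  ext Z'
  simp only [Finset.mem_image]
  constructor
  · intro hZ'
    obtain ⟨Z, hZ, rfl⟩ := hφ.1.2.2 hZ'
    exact ⟨Z, hZ, rfl⟩
  · rintro ⟨Z, hZ, rfl⟩
    exact algIso_mapsTo hφ hZ

lemma algIso_card_group (hφ : IsAlgIso A A' φ) : Fintype.card G' = Fintype.card G := by
  rw [← A'.sum_card_parts, ← A.sum_card_parts, algIso_parts_eq hφ,
    Finset.sum_image (fun X hX Y hY h => algIso_injOn hφ hX hY h)]
  exact Finset.sum_congr rfl fun X hX => algIso_card hφ hX

end AlgIso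
section Key

lemma grpInd_mul_image_apply {H G : Type*} [Group H] [Fintype H] [DecidableEq H]
    [Group G] [Fintype G] [DecidableEq G] (ι : H →* G) (hι : Function.Injective ι)
    (X Y : Finset H) (z : H) :
    (grpInd (X.image ι) * grpInd (Y.image ι)).coeff (ι z) = (grpInd X * grpInd Y).coeff z := by
  rw [grpInd_mul_apply, grpInd_mul_apply, Finset.sum_image (fun a _ b _ h => hι h)]
  refine Finset.sum_congr rfl fun x hx => ?_
  rw [Finset.sum_image (fun a _ b _ h => hι h)]
  refine Finset.sum_congr rfl fun y hy => ?_
  have hcond : (ι x * ι y = ι z) ↔ x * y = z := by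
    rw [← map_mul ι x y]
    exact ⟨fun h => hι h, fun h => congrArg ι h⟩
  exact if_congr hcond rfl rfl

lemma key {H G G' : Type} [CommGroup H] [Fintype H] [DecidableEq H]
    [CommGroup G] [Fintype G] [DecidableEq G]
    [CommGroup G'] [Fintype G'] [DecidableEq G']
    (A : SchurRing H) (B : SchurRing G) (A' : SchurRing G')
    (hA : A.IsSeparableAbelian)
    (φ : Finset G → Finset G') (hφ : IsAlgIso B A' φ)
    (ι : H →* G) (hι : Function.Injective ι)
    (hparts : ∀ X ∈ A.parts, X.image ι ∈ B.parts)
    (hclosed : ∀ X ∈ A.parts, ∀ Y ∈ A.parts, ∀ Z ∈ B.parts,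
      (∃ z ∈ Z, (grpInd (X.image ι) * grpInd (Y.image ι)).coeff z ≠ 0) →
      ∃ W ∈ A.parts, Z = W.image ι) :
    ∃ (K : Subgroup G') (f : H → G'),
      (∀ x : G', x ∈ K ↔ ∃ X ∈ A.parts, x ∈ φ (X.image ι)) ∧
      Function.Injective f ∧
      (∀ a : H, f a ∈ K) ∧
      (∀ X ∈ A.parts, φ (X.image ι) = X.image f) ∧
      (∀ X ∈ A.parts, ∀ g h : H, h * g⁻¹ ∈ X ↔ f h * (f g)⁻¹ ∈ X.image f) := by
  classical
  set U : Finset G' := A.parts.biUnion (fun X => φ (X.image ι)) with hU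
  have hmemU : ∀ x : G', x ∈ U ↔ ∃ X ∈ A.parts, x ∈ φ (X.image ι) := by
    intro x; simp [hU]
  have hone_img : (({1} : Finset H)).image ⇑ι = ({1} : Finset G) := by simp
  have hUone : (1 : G') ∈ U := by
    rw [hmemU]
    refine ⟨{1}, A.one_mem, ?_⟩
    rw [hone_img, algIso_one hφ]
    exact Finset.mem_singleton_self 1
  have hUmul : ∀ a ∈ U, ∀ b ∈ U, a * b ∈ U := by
    intro a ha b hb
    rw [hmemU] at ha hb ⊢
    obtain ⟨X, hX, haX⟩ := ha
    obtain ⟨Y, hY, hbY⟩ := hb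
    obtain ⟨Z, hZ, hab⟩ := algIso_cover hφ (a * b)
    obtain ⟨z, hz⟩ := B.nonempty_mem Z hZ
    have hpos : 0 < (grpInd (φ (X.image ι)) * grpInd (φ (Y.image ι))).coeff (a * b) :=
      (grpInd_mul_apply_pos_iff _ _ _).mpr ⟨a, haX, b, hbY, rfl⟩
    rw [algIso_transfer hφ (hparts X hX) (hparts Y hY) hZ hz hab] at hpos
    obtain ⟨W, hW, rfl⟩ := hclosed X hX Y hY Z hZ ⟨z, hz, ne_of_gt hpos⟩
    exact ⟨W, hW, hab⟩
  have himg_inv : ∀ X : Finset H, (X.image (·⁻¹)).image ⇑ι = (X.image ⇑ι).image (·⁻¹) := by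
    intro X
    rw [Finset.image_image, Finset.image_image]
    refine Finset.image_congr fun x hx => ?_
    simp
  have hUinv : ∀ a ∈ U, a⁻¹ ∈ U := by
    intro a ha
    rw [hmemU] at ha ⊢
    obtain ⟨X, hX, haX⟩ := ha
    refine ⟨X.image (·⁻¹), A.inv_mem X hX, ?_⟩
    rw [himg_inv, algIso_inv hφ (hparts X hX)]
    exact Finset.mem_image.mpr ⟨a, haX, rfl⟩
  set K : Subgroup G' :=
    { carrier := ↑U
      mul_mem' := fun ha hb => hUmul _ ha _ hb
      one_mem' := hUone
      inv_mem' := fun ha => hUinv _ ha } with hKdef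
  have hmemK : ∀ x : G', x ∈ K ↔ x ∈ U := fun x => Iff.rfl
  haveI : DecidablePred (· ∈ K) := fun x => decidable_of_iff (x ∈ U) (hmemK x).symm
  set ψ : Finset G' → Finset K := fun S => S.subtype (· ∈ K) with hψ
  have hsubmem : ∀ X ∈ A.parts, ∀ x ∈ φ (X.image ι), x ∈ K := by
    intro X hX x hx
    rw [hmemK, hmemU]; exact ⟨X, hX, hx⟩
  have hmemψ : ∀ (S : Finset G') (k : K), k ∈ ψ S ↔ (k : G') ∈ S := by
    intro S k; simp [hψ]
  have hcoeψ : ∀ S : Finset G', (∀ x ∈ S, x ∈ K) →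
      (ψ S).map (Function.Embedding.subtype (· ∈ K)) = S := by
    intro S hS
    rw [hψ]
    rw [Finset.subtype_map]
    exact Finset.filter_eq_self.mpr hS
  have hsubapply : ∀ S T : Finset G', (∀ x ∈ S, x ∈ K) → (∀ x ∈ T, x ∈ K) → ∀ k : K,
      (grpInd (ψ S) * grpInd (ψ T)).coeff k = (grpInd S * grpInd T).coeff (k : G') := by
    intro S T hS hT k
    conv_rhs => rw [← hcoeψ S hS, ← hcoeψ T hT]
    rw [grpInd_mul_apply, grpInd_mul_apply, Finset.sum_map]
    refine Finset.sum_congr rfl fun a ha => ?_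
    rw [Finset.sum_map]
    refine Finset.sum_congr rfl fun b hb => ?_
    have hiff : ((a : G') * b = (k : G')) ↔ a * b = k := by
      rw [← Subgroup.coe_mul]
      exact Subtype.coe_inj
    simp [Function.Embedding.coe_subtype, hiff]
  set parts'' : Finset (Finset K) := A.parts.image (fun X => ψ (φ (X.image ι)))
    with hparts''
  have hmem'' : ∀ P ∈ parts'', ∃ X ∈ A.parts, P = ψ (φ (X.image ι)) := by
    intro P hP
    obtain ⟨X, hX, rfl⟩ := Finset.mem_image.mp hP
    exact ⟨X, hX, rfl⟩
  have hnonempty'' : ∀ P ∈ parts'', P.Nonempty := by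
    intro P hP
    obtain ⟨X, hX, rfl⟩ := hmem'' P hP
    obtain ⟨y, hy⟩ := A'.nonempty_mem _ (algIso_mapsTo hφ (hparts X hX))
    exact ⟨⟨y, hsubmem X hX y hy⟩, (hmemψ _ _).mpr hy⟩
  have hcover'' : ∀ k : K, ∃ P ∈ parts'', k ∈ P := by
    intro k
    have := (hmemU (k : G')).mp ((hmemK (k : G')).mp k.2)
    obtain ⟨X, hX, hk⟩ := this
    exact ⟨ψ (φ (X.image ι)), Finset.mem_image_of_mem _ hX, (hmemψ _ _).mpr hk⟩
  have hdisj'' : ∀ P ∈ parts'', ∀ Q ∈ parts'', P ≠ Q → Disjoint P Q := by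
    intro P hP Q hQ hPQ
    obtain ⟨X, hX, rfl⟩ := hmem'' P hP
    obtain ⟨Y, hY, rfl⟩ := hmem'' Q hQ
    have hne : φ (X.image ι) ≠ φ (Y.image ι) := fun h => hPQ (by rw [h])
    have hd := A'.pairwise_disjoint _ (algIso_mapsTo hφ (hparts X hX)) _
      (algIso_mapsTo hφ (hparts Y hY)) hne
    rw [Finset.disjoint_left] at hd ⊢
    intro k hk1 hk2
    exact hd ((hmemψ _ _).mp hk1) ((hmemψ _ _).mp hk2)
  have hone'' : (({1} : Finset K)) ∈ parts'' := by
    rw [hparts'']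
    refine Finset.mem_image.mpr ⟨{1}, A.one_mem, ?_⟩
    rw [hone_img, algIso_one hφ]
    ext k
    rw [hmemψ]
    simp only [Finset.mem_singleton]
    exact (OneMemClass.coe_eq_one).symm.symm
  have hψinv : ∀ S : Finset G', (∀ x ∈ S, x ∈ K) →
      (ψ S).image (·⁻¹) = ψ (S.image (·⁻¹)) := by
    intro S hS
    ext k
    rw [hmemψ]
    simp only [Finset.mem_image]
    constructor
    · rintro ⟨j, hj, rfl⟩
      exact ⟨(j : G'), (hmemψ _ _).mp hj, by simp⟩
    · rintro ⟨y, hy, hyk⟩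
      refine ⟨⟨y, hS y hy⟩, (hmemψ _ _).mpr hy, ?_⟩
      apply Subtype.ext
      simpa using hyk
  have hinv'' : ∀ P ∈ parts'', P.image (·⁻¹) ∈ parts'' := by
    intro P hP
    obtain ⟨X, hX, rfl⟩ := hmem'' P hP
    rw [hψinv _ (hsubmem X hX), ← algIso_inv hφ (hparts X hX), ← himg_inv]
    exact Finset.mem_image_of_mem _ (A.inv_mem X hX)
  have hconst : ∀ X ∈ A.parts, ∀ Y ∈ A.parts, ∀ Z ∈ A.parts, ∀ k₁ k₂ : K,
      (k₁ : G') ∈ φ (Z.image ι) → (k₂ : G') ∈ φ (Z.image ι) →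
      (grpInd (ψ (φ (X.image ι))) * grpInd (ψ (φ (Y.image ι)))).coeff k₁ =
      (grpInd (ψ (φ (X.image ι))) * grpInd (ψ (φ (Y.image ι)))).coeff k₂ := by
    intro X hX Y hY Z hZ k₁ k₂ h1 h2
    obtain ⟨z, hz⟩ := A.nonempty_mem Z hZ
    have hzι : ι z ∈ Z.image ι := Finset.mem_image_of_mem _ hz
    rw [hsubapply _ _ (hsubmem X hX) (hsubmem Y hY) k₁,
        hsubapply _ _ (hsubmem X hX) (hsubmem Y hY) k₂,
        algIso_transfer hφ (hparts X hX) (hparts Y hY) (hparts Z hZ) hzι h1,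
        algIso_transfer hφ (hparts X hX) (hparts Y hY) (hparts Z hZ) hzι h2]
  have hmul'' : ∀ P ∈ parts'', ∀ Q ∈ parts'', ∃ c : Finset K → ℤ,
      grpInd P * grpInd Q = ∑ R ∈ parts'', c R • grpInd R := by
    intro P hP Q hQ
    obtain ⟨X, hX, rfl⟩ := hmem'' P hP
    obtain ⟨Y, hY, rfl⟩ := hmem'' Q hQ
    set F : MonoidAlgebra ℤ K := grpInd (ψ (φ (X.image ι))) * grpInd (ψ (φ (Y.image ι)))
      with hF
    refine ⟨fun R => if h : ∃ k, k ∈ R then F.coeff h.choose else 0, ?_⟩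
    apply MonoidAlgebra.ext
    apply Finsupp.ext
    intro k
    obtain ⟨R₀, hR₀, hkR₀⟩ := hcover'' k
    rw [MonoidAlgebra.coeff_sum, Finset.sum_apply']
    rw [Finset.sum_eq_single R₀]
    · have hex : ∃ j, j ∈ R₀ := ⟨k, hkR₀⟩
      show F.coeff k = (if h : ∃ j, j ∈ R₀ then F.coeff h.choose else 0) • (grpInd R₀).coeff k
      rw [dif_pos hex, grpInd_apply, if_pos hkR₀, smul_eq_mul, mul_one]
      obtain ⟨Z, hZ, rfl⟩ := hmem'' R₀ hR₀
      exact hconst X hX Y hY Z hZ k hex.choose ((hmemψ _ _).mp hkR₀)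
        ((hmemψ _ _).mp hex.choose_spec)
    · intro R hR hRne
      have : k ∉ R := fun hc =>
        (Finset.disjoint_left.mp (hdisj'' R hR R₀ hR₀ hRne)) hc hkR₀
      rw [MonoidAlgebra.coeff_smul_apply, grpInd_apply, if_neg this, smul_zero]
    · intro h
      exact absurd hR₀ h
  set A'' : SchurRing K :=
    { parts := parts''
      nonempty_mem := hnonempty''
      cover := hcover''
      pairwise_disjoint := hdisj''
      one_mem := hone''
      inv_mem := hinv''
      mul_mem := hmul'' } with hA''
  set φ' : Finset H → Finset K := fun X => ψ (φ (X.image ι)) with hφ'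
  have halg : IsAlgIso A A'' φ' := by
    constructor
    · refine ⟨?_, ?_, ?_⟩
      · intro X hX
        exact Finset.mem_coe.mpr (Finset.mem_image_of_mem _ (Finset.mem_coe.mp hX))
      · intro X hX Y hY h
        have h' := congrArg (Finset.map (Function.Embedding.subtype (· ∈ K))) h
        rw [hcoeψ _ (hsubmem X (Finset.mem_coe.mp hX)),
          hcoeψ _ (hsubmem Y (Finset.mem_coe.mp hY))] at h'
        exact Finset.image_injective hι
          (algIso_injOn hφ (hparts X (Finset.mem_coe.mp hX))
            (hparts Y (Finset.mem_coe.mp hY)) h')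
      · intro P hP
        obtain ⟨X, hX, rfl⟩ := hmem'' P (Finset.mem_coe.mp hP)
        exact ⟨X, Finset.mem_coe.mpr hX, rfl⟩
    · intro X hX Y hY Z hZ z hz k hk
      rw [hsubapply _ _ (hsubmem X hX) (hsubmem Y hY) k,
        algIso_transfer hφ (hparts X hX) (hparts Y hY) (hparts Z hZ)
          (Finset.mem_image_of_mem _ hz) ((hmemψ _ _).mp hk),
        grpInd_mul_image_apply ι hι]
  obtain ⟨f₀, hcomb, himg⟩ := hA K A'' φ' halg
  refine ⟨K, fun a => ((f₀ a : K) : G'), hmemU, ?_, fun a => (f₀ a).2, ?_, ?_⟩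
  · intro a b h
    exact hcomb.1.1 (Subtype.val_injective h)
  · intro X hX
    have h1 := congrArg (Finset.map (Function.Embedding.subtype (· ∈ K))) (himg X hX)
    rw [hcoeψ _ (hsubmem X hX)] at h1
    rw [h1, Finset.map_eq_image, Finset.image_image]
    rfl
  · intro X hX g h
    rw [(hcomb.2 X hX).2 g h]
    constructor
    · intro hmem
      obtain ⟨x, hx, hfx⟩ := Finset.mem_image.mp hmem
      refine Finset.mem_image.mpr ⟨x, hx, ?_⟩
      rw [hfx]
      simp
    · intro hmem
      obtain ⟨x, hx, hfx⟩ := Finset.mem_image.mp hmem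
      refine Finset.mem_image.mpr ⟨x, hx, ?_⟩
      apply Subtype.ext
      simpa using hfx

end Key
/-- the tensor product of two separable S-rings over finite abelian groups is
separable with respect to the class of abelian groups. -/
theorem stmt15 {G₁ G₂ : Type} [CommGroup G₁] [Fintype G₁] [DecidableEq G₁]
    [CommGroup G₂] [Fintype G₂] [DecidableEq G₂]
    (A₁ : SchurRing G₁) (A₂ : SchurRing G₂)
    (h₁ : A₁.IsSeparableAbelian) (h₂ : A₂.IsSeparableAbelian)
    (B : SchurRing (G₁ × G₂))
    (hB : ∀ X : Finset (G₁ × G₂), X ∈ B.parts ↔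
      ∃ X₁ ∈ A₁.parts, ∃ X₂ ∈ A₂.parts, X = X₁ ×ˢ X₂) :
    B.IsSeparableAbelian := by
  intro G' _ _ _ A' φ hφ
  classical
  set ι₁ : G₁ →* G₁ × G₂ := MonoidHom.inl G₁ G₂ with hι₁def
  set ι₂ : G₂ →* G₁ × G₂ := MonoidHom.inr G₁ G₂ with hι₂def
  have hι₁ : Function.Injective ι₁ := fun a b h => by simpa [hι₁def] using congrArg Prod.fst h
  have hι₂ : Function.Injective ι₂ := fun a b h => by simpa [hι₂def] using congrArg Prod.snd h
  have himg₁ : ∀ X : Finset G₁, X.image ι₁ = X ×ˢ ({1} : Finset G₂) := by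
    intro X
    ext ⟨a, b⟩
    simp [hι₁def, Finset.mem_product, Prod.ext_iff, eq_comm, and_comm]
  have himg₂ : ∀ X : Finset G₂, X.image ι₂ = (({1} : Finset G₁) ×ˢ X) := by
    intro X
    ext ⟨a, b⟩
    simp [hι₂def, Finset.mem_product, Prod.ext_iff, eq_comm, and_comm]
  have hparts₁ : ∀ X ∈ A₁.parts, X.image ι₁ ∈ B.parts := by
    intro X hX
    rw [himg₁]
    exact (hB _).mpr ⟨X, hX, {1}, A₂.one_mem, rfl⟩
  have hparts₂ : ∀ X ∈ A₂.parts, X.image ι₂ ∈ B.parts := by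
    intro X hX
    rw [himg₂]
    exact (hB _).mpr ⟨{1}, A₁.one_mem, X, hX, rfl⟩
  have hclosed₁ : ∀ X ∈ A₁.parts, ∀ Y ∈ A₁.parts, ∀ Z ∈ B.parts,
      (∃ z ∈ Z, (grpInd (X.image ι₁) * grpInd (Y.image ι₁)).coeff z ≠ 0) →
      ∃ W ∈ A₁.parts, Z = W.image ι₁ := by
    intro X hX Y hY Z hZ ⟨z, hz, hne⟩
    obtain ⟨Z₁, hZ₁, Z₂, hZ₂, rfl⟩ := (hB Z).mp hZ
    obtain ⟨x, hx, y, hy, hxy⟩ := (grpInd_mul_apply_ne_zero_iff _ _ _).mp hne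
    obtain ⟨x₁, hx₁, rfl⟩ := Finset.mem_image.mp hx
    obtain ⟨y₁, hy₁, rfl⟩ := Finset.mem_image.mp hy
    have hz2 : z.2 = 1 := by rw [← hxy]; simp [hι₁def]
    have h1Z₂ : (1 : G₂) ∈ Z₂ := hz2 ▸ (Finset.mem_product.mp hz).2
    have : Z₂ = ({1} : Finset G₂) := A₂.eq_one_part hZ₂ h1Z₂
    subst this
    exact ⟨Z₁, hZ₁, (himg₁ Z₁).symm⟩
  have hclosed₂ : ∀ X ∈ A₂.parts, ∀ Y ∈ A₂.parts, ∀ Z ∈ B.parts,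
      (∃ z ∈ Z, (grpInd (X.image ι₂) * grpInd (Y.image ι₂)).coeff z ≠ 0) →
      ∃ W ∈ A₂.parts, Z = W.image ι₂ := by
    intro X hX Y hY Z hZ ⟨z, hz, hne⟩
    obtain ⟨Z₁, hZ₁, Z₂, hZ₂, rfl⟩ := (hB Z).mp hZ
    obtain ⟨x, hx, y, hy, hxy⟩ := (grpInd_mul_apply_ne_zero_iff _ _ _).mp hne
    obtain ⟨x₁, hx₁, rfl⟩ := Finset.mem_image.mp hx
    obtain ⟨y₁, hy₁, rfl⟩ := Finset.mem_image.mp hy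
    have hz1 : z.1 = 1 := by rw [← hxy]; simp [hι₂def]
    have h1Z₁ : (1 : G₁) ∈ Z₁ := hz1 ▸ (Finset.mem_product.mp hz).1
    have : Z₁ = ({1} : Finset G₁) := A₁.eq_one_part hZ₁ h1Z₁
    subst this
    exact ⟨Z₂, hZ₂, (himg₂ Z₂).symm⟩
  obtain ⟨K₁, f₁, hK₁, hf₁inj, hf₁K, hf₁img, hf₁cay⟩ :=
    key A₁ B A' h₁ φ hφ ι₁ hι₁ hparts₁ hclosed₁
  obtain ⟨K₂, f₂, hK₂, hf₂inj, hf₂K, hf₂img, hf₂cay⟩ :=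
    key A₂ B A' h₂ φ hφ ι₂ hι₂ hparts₂ hclosed₂
  -- trivial intersection
  have htriv : ∀ x : G', x ∈ K₁ → x ∈ K₂ → x = 1 := by
    intro x hx1 hx2
    obtain ⟨X, hX, hxX⟩ := (hK₁ x).mp hx1
    obtain ⟨Y, hY, hxY⟩ := (hK₂ x).mp hx2
    have heq : X.image ι₁ = Y.image ι₂ :=
      algIso_part_eq hφ (hparts₁ X hX) (hparts₂ Y hY) hxX hxY
    have hXone : X = ({1} : Finset G₁) := by
      obtain ⟨x₀, hx₀⟩ := A₁.nonempty_mem X hX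
      have : ι₁ x₀ ∈ Y.image ι₂ := heq ▸ Finset.mem_image_of_mem _ hx₀
      obtain ⟨y₀, hy₀, hio⟩ := Finset.mem_image.mp this
      have : x₀ = 1 := by
        have := congrArg Prod.fst hio
        simpa [hι₁def, hι₂def] using this.symm
      exact A₁.eq_one_part hX (this ▸ hx₀)
    have himgone : X.image ι₁ = ({1} : Finset (G₁ × G₂)) := by
      rw [hXone]
      ext ⟨a, b⟩
      simp [hι₁def, Prod.ext_iff, eq_comm]
    rw [himgone, algIso_one hφ] at hxX
    exact Finset.mem_singleton.mp hxX
  have hquot : ∀ a b c d : G', a ∈ K₁ → b ∈ K₂ → c ∈ K₁ → d ∈ K₂ →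
      a * b = c * d → a = c ∧ b = d := by
    intro a b c d ha hb hc hd hab
    have h1 : a * c⁻¹ = d * b⁻¹ := by
      have hcb : (a * c⁻¹) * (c * b) = (d * b⁻¹) * (c * b) := by
        calc (a * c⁻¹) * (c * b) = a * b := by group
        _ = c * d := hab
        _ = (d * b⁻¹) * (c * b) := by
            simp [mul_comm, mul_left_comm, mul_assoc]
      exact mul_right_cancel hcb
    have hm1 : a * c⁻¹ ∈ K₁ := K₁.mul_mem ha (K₁.inv_mem hc)
    have hm2 : a * c⁻¹ ∈ K₂ := h1 ▸ K₂.mul_mem hd (K₂.inv_mem hb)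
    have hac : a * c⁻¹ = 1 := htriv _ hm1 hm2
    have hace : a = c := mul_inv_eq_one.mp hac
    refine ⟨hace, ?_⟩
    subst hace
    exact mul_left_cancel hab
  set f : G₁ × G₂ → G' := fun p => f₁ p.1 * f₂ p.2 with hfdef
  have hinj : Function.Injective f := by
    rintro ⟨a₁, a₂⟩ ⟨b₁, b₂⟩ h
    obtain ⟨h1, h2⟩ := hquot _ _ _ _ (hf₁K a₁) (hf₂K a₂) (hf₁K b₁) (hf₂K b₂) h
    exact Prod.ext (hf₁inj h1) (hf₂inj h2)
  have hbij : Function.Bijective f :=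
    (Fintype.bijective_iff_injective_and_card f).mpr
      ⟨hinj, (algIso_card_group hφ).symm⟩
  -- pointwise product formula in B
  have hgrpprod : ∀ (X₁ : Finset G₁) (X₂ : Finset G₂) (z : G₁ × G₂),
      (grpInd (X₁.image ι₁) * grpInd (X₂.image ι₂)).coeff z = (grpInd (X₁ ×ˢ X₂)).coeff z := by
    intro X₁ X₂ z
    obtain ⟨z₁, z₂⟩ := z
    rw [grpInd_mul_apply, grpInd_apply,
      Finset.sum_image (fun a _ b _ h => hι₁ h)]
    have hin : ∀ x ∈ X₁, (∑ y ∈ X₂.image ι₂, (if ι₁ x * y = (z₁, z₂) then (1:ℤ) else 0)) =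
        if x = z₁ then (if z₂ ∈ X₂ then 1 else 0) else 0 := by
      intro x hx
      rw [Finset.sum_image (fun a _ b _ h => hι₂ h)]
      have hcond : ∀ y : G₂, (ι₁ x * ι₂ y = (z₁, z₂)) ↔ (y = z₂ ∧ x = z₁) := by
        intro y
        simp [hι₁def, hι₂def, Prod.ext_iff, and_comm]
      simp only [hcond]
      by_cases hxz : x = z₁
      · simp only [hxz, and_true]
        rw [Finset.sum_ite_eq' X₂ z₂ (fun _ => (1:ℤ))]
        simp
      · simp [hxz]
    rw [Finset.sum_congr rfl hin, Finset.sum_ite_eq' X₁ z₁ _]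
    simp only [Finset.mem_product]
    by_cases h1 : z₁ ∈ X₁ <;> by_cases h2 : z₂ ∈ X₂ <;> simp [h1, h2]
  -- the main identity
  have hmain : ∀ X₁ ∈ A₁.parts, ∀ X₂ ∈ A₂.parts,
      φ (X₁ ×ˢ X₂) = (X₁ ×ˢ X₂).image f := by
    intro X₁ hX₁ X₂ hX₂
    have hXB : X₁ ×ˢ X₂ ∈ B.parts := (hB _).mpr ⟨X₁, hX₁, X₂, hX₂, rfl⟩
    ext g'
    obtain ⟨Z, hZ, hg⟩ := algIso_cover hφ g'
    obtain ⟨z, hz⟩ := B.nonempty_mem Z hZ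
    have hcoeff : (grpInd (φ (X₁.image ι₁)) * grpInd (φ (X₂.image ι₂))).coeff g' =
        (grpInd (X₁ ×ˢ X₂)).coeff z :=
      (algIso_transfer hφ (hparts₁ X₁ hX₁) (hparts₂ X₂ hX₂) hZ hz hg).trans
        (hgrpprod X₁ X₂ z)
    constructor
    · intro hgφ
      have hZeq : Z = X₁ ×ˢ X₂ := algIso_part_eq hφ hZ hXB hg hgφ
      have hzmem : z ∈ X₁ ×ˢ X₂ := hZeq ▸ hz
      have hpos : 0 < (grpInd (φ (X₁.image ι₁)) * grpInd (φ (X₂.image ι₂))).coeff g' := by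
        rw [hcoeff, grpInd_apply, if_pos hzmem]
        norm_num
      obtain ⟨a, ha, b, hb, hab⟩ := (grpInd_mul_apply_pos_iff _ _ _).mp hpos
      rw [hf₁img X₁ hX₁] at ha
      rw [hf₂img X₂ hX₂] at hb
      obtain ⟨x₁, hx₁, rfl⟩ := Finset.mem_image.mp ha
      obtain ⟨x₂, hx₂, rfl⟩ := Finset.mem_image.mp hb
      exact Finset.mem_image.mpr ⟨(x₁, x₂), Finset.mem_product.mpr ⟨hx₁, hx₂⟩, hab⟩
    · intro hgim
      obtain ⟨⟨x₁, x₂⟩, hxmem, hfx⟩ := Finset.mem_image.mp hgim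
      obtain ⟨hx₁, hx₂⟩ := Finset.mem_product.mp hxmem
      have hpos : 0 < (grpInd (φ (X₁.image ι₁)) * grpInd (φ (X₂.image ι₂))).coeff g' := by
        refine (grpInd_mul_apply_pos_iff _ _ _).mpr
          ⟨f₁ x₁, ?_, f₂ x₂, ?_, hfx⟩
        · rw [hf₁img X₁ hX₁]; exact Finset.mem_image_of_mem _ hx₁
        · rw [hf₂img X₂ hX₂]; exact Finset.mem_image_of_mem _ hx₂
      have hzmem : z ∈ X₁ ×ˢ X₂ := by
        by_contra hc
        rw [hcoeff, grpInd_apply, if_neg hc] at hpos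
        exact lt_irrefl 0 hpos
      have hZeq : Z = X₁ ×ˢ X₂ := B.part_eq hZ hXB hz hzmem
      rw [← hZeq]
      exact hg
  have hφf : ∀ X ∈ B.parts, φ X = X.image f := by
    intro X hX
    obtain ⟨X₁, h1, X₂, h2, rfl⟩ := (hB X).mp hX
    exact hmain X₁ h1 X₂ h2
  have hcomm4 : ∀ a b c d : G', (a * b) * (c * d)⁻¹ = (a * c⁻¹) * (b * d⁻¹) := by
    intro a b c d
    rw [mul_inv]
    simp [mul_comm, mul_left_comm, mul_assoc]
  refine ⟨f, ⟨hbij, ?_⟩, hφf⟩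
  intro X hX
  refine ⟨(hφf X hX) ▸ algIso_mapsTo hφ hX, ?_⟩
  obtain ⟨X₁, hX₁, X₂, hX₂, rfl⟩ := (hB X).mp hX
  rintro ⟨g₁, g₂⟩ ⟨h₁', h₂'⟩
  have hLHS : ((h₁', h₂') * (g₁, g₂)⁻¹ ∈ X₁ ×ˢ X₂) ↔
      (h₁' * g₁⁻¹ ∈ X₁ ∧ h₂' * g₂⁻¹ ∈ X₂) := by
    rw [Finset.mem_product]; rfl
  have hval : f (h₁', h₂') * (f (g₁, g₂))⁻¹ =
      (f₁ h₁' * (f₁ g₁)⁻¹) * (f₂ h₂' * (f₂ g₂)⁻¹) := hcomm4 _ _ _ _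
  rw [hLHS, hf₁cay X₁ hX₁ g₁ h₁', hf₂cay X₂ hX₂ g₂ h₂', hval]
  constructor
  · rintro ⟨hu, hv⟩
    obtain ⟨x₁, hx₁, hux⟩ := Finset.mem_image.mp hu
    obtain ⟨x₂, hx₂, hvx⟩ := Finset.mem_image.mp hv
    refine Finset.mem_image.mpr ⟨(x₁, x₂), Finset.mem_product.mpr ⟨hx₁, hx₂⟩, ?_⟩
    show f₁ x₁ * f₂ x₂ = _
    rw [hux, hvx]
  · intro hmem
    obtain ⟨⟨x₁, x₂⟩, hxmem, hfx⟩ := Finset.mem_image.mp hmem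
    obtain ⟨hx₁, hx₂⟩ := Finset.mem_product.mp hxmem
    have hfx' : f₁ x₁ * f₂ x₂ = (f₁ h₁' * (f₁ g₁)⁻¹) * (f₂ h₂' * (f₂ g₂)⁻¹) := hfx
    have hu1 : f₁ h₁' * (f₁ g₁)⁻¹ ∈ K₁ := K₁.mul_mem (hf₁K h₁') (K₁.inv_mem (hf₁K g₁))
    have hv1 : f₂ h₂' * (f₂ g₂)⁻¹ ∈ K₂ := K₂.mul_mem (hf₂K h₂') (K₂.inv_mem (hf₂K g₂))
    obtain ⟨he1, he2⟩ := hquot _ _ _ _ (hf₁K x₁) (hf₂K x₂) hu1 hv1 hfx'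
    exact ⟨Finset.mem_image.mpr ⟨x₁, hx₁, he1⟩, Finset.mem_image.mpr ⟨x₂, hx₂, he2⟩⟩
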